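/- arXiv:0711.1876 — 2 statements merged into one kernel-verified Lean document; each statement's English description precedes it below -/
import Mathlib

section
/- If k_0 > 0 and k_1 + 2k_2 > 2|k_2|, then the quadratic form E(y) = (k_1/2)∑_{i}(y_{i+1}-y_i)^2 + (k_2/2)∑_{i}(y_{i+2}-y_i)^2 + (k_0/2)∑_i y_i^2 on R^n is positive definite (coercive), i.e., there exists c > 0 with E(y) ≥ c‖y‖² for all y ∈ R^n. -/
lemma fk_aux (n : ℕ) (hn : 2 ≤ n) (y : ℕ → ℝ) :
    ∑ i ∈ Finset.range (n - 2), (y (i + 2) - y i) ^ 2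
      ≤ 4 * ∑ i ∈ Finset.range (n - 1), (y (i + 1) - y i) ^ 2 := by
  set f : ℕ → ℝ := fun i => (y (i + 1) - y i) ^ 2 with hf
  have h1 : ∑ i ∈ Finset.range (n - 2), (y (i + 2) - y i) ^ 2
      ≤ ∑ i ∈ Finset.range (n - 2), (2 * f (i + 1) + 2 * f i) := by
    apply Finset.sum_le_sum
    intro i _
    simp only [hf]
    nlinarith [sq_nonneg (y (i + 2) - 2 * y (i + 1) + y i)]
  have h2 : ∑ i ∈ Finset.range (n - 2), f (i + 1) ≤ ∑ i ∈ Finset.range (n - 1), f i := by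
    have hrw : n - 1 = (n - 2) + 1 := by omega
    rw [hrw, Finset.sum_range_succ']
    have : (0:ℝ) ≤ f 0 := sq_nonneg _
    linarith
  have h3 : ∑ i ∈ Finset.range (n - 2), f i ≤ ∑ i ∈ Finset.range (n - 1), f i := by
    apply Finset.sum_le_sum_of_subset_of_nonneg
    · exact Finset.range_subset_range.2 (by omega)
    · intro i _ _; exact sq_nonneg _
  calc ∑ i ∈ Finset.range (n - 2), (y (i + 2) - y i) ^ 2
      ≤ ∑ i ∈ Finset.range (n - 2), (2 * f (i + 1) + 2 * f i) := h1
    _ = 2 * ∑ i ∈ Finset.range (n - 2), f (i + 1)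
        + 2 * ∑ i ∈ Finset.range (n - 2), f i := by
        rw [Finset.sum_add_distrib, Finset.mul_sum, Finset.mul_sum]
    _ ≤ 4 * ∑ i ∈ Finset.range (n - 1), f i := by linarith

/-- Coercivity of the Frenkel-Kontorova quadratic form: if `k₀ > 0` and
`k₁ + 2k₂ > 2|k₂|`, the energy is positive definite on `ℝ^n`. -/
theorem fk_energy_coercive (n : ℕ) (hn : 2 ≤ n) (k0 k1 k2 : ℝ)
    (hk0 : 0 < k0) (hk12 : 2 * |k2| < k1 + 2 * k2) :
    ∃ c > 0, ∀ y : ℕ → ℝ,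
      k1 / 2 * ∑ i ∈ Finset.range (n - 1), (y (i + 1) - y i) ^ 2
        + k2 / 2 * ∑ i ∈ Finset.range (n - 2), (y (i + 2) - y i) ^ 2
        + k0 / 2 * ∑ i ∈ Finset.range n, (y i) ^ 2
      ≥ c * ∑ i ∈ Finset.range n, (y i) ^ 2 := by
  refine ⟨k0 / 2, by linarith, fun y => ?_⟩
  set S1 := ∑ i ∈ Finset.range (n - 1), (y (i + 1) - y i) ^ 2 with hS1
  set S2 := ∑ i ∈ Finset.range (n - 2), (y (i + 2) - y i) ^ 2 with hS2
  have hS1nn : 0 ≤ S1 := Finset.sum_nonneg fun i _ => sq_nonneg _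
  have hS2nn : 0 ≤ S2 := Finset.sum_nonneg fun i _ => sq_nonneg _
  have hle : S2 ≤ 4 * S1 := fk_aux n hn y
  have key : 0 ≤ k1 / 2 * S1 + k2 / 2 * S2 := by
    rcases le_or_gt 0 k2 with h | h
    · have : 0 < k1 := by rw [abs_of_nonneg h] at hk12; linarith
      positivity
    · rw [abs_of_neg h] at hk12
      nlinarith
  linarith
end

section
/- Exactness of the estimator under full partial refinement: if the pc level coincides with the fully atomistic level (I^{ap} = Id, so g^{pc} = g^{ac}), then the error estimator η := (g^{pc} − I^{pq} R^{qp} g^{pc})^T (f^{ac} − M^{ac} I^{aq} y^{qc}) equals the exact goal error Q(y^{ac} − I^{aq} y^{qc}) = q^T(y^{ac} − I^{aq} y^{qc}). -/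
open Matrix

/-- If the pc level coincides with the fully atomistic level, the error
estimator equals the exact goal error. -/
theorem estimator_exact_full_refinement (m k : ℕ)
    (Mac : Matrix (Fin m) (Fin m) ℝ) (hsym : Mac.IsSymm)
    (Iaq : Matrix (Fin m) (Fin k) ℝ) (Rqp : Matrix (Fin k) (Fin m) ℝ)
    (hR : Rqp * Iaq = 1)
    (fac q yac gac : Fin m → ℝ) (yqc : Fin k → ℝ)
    (hprimal : Mac.mulVec yac = fac)
    (hcoarse : (Iaqᵀ * Mac * Iaq).mulVec yqc = Iaqᵀ.mulVec fac)
    (hdual : Mac.mulVec gac = q) :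
    (gac - Iaq.mulVec (Rqp.mulVec gac)) ⬝ᵥ
        (fac - Mac.mulVec (Iaq.mulVec yqc))
      = q ⬝ᵥ (yac - Iaq.mulVec yqc) := by
  set r : Fin m → ℝ := fac - Mac.mulVec (Iaq.mulVec yqc) with hr
  have hortho : Iaqᵀ.mulVec r = 0 := by
    rw [hr, mulVec_sub, ← hcoarse]
    simp [mulVec_mulVec, Matrix.mul_assoc]
  have h2 : Iaq.mulVec (Rqp.mulVec gac) ⬝ᵥ r = 0 := by
    rw [dotProduct_comm, dotProduct_mulVec, ← mulVec_transpose, hortho]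
    simp
  have h1 : gac ⬝ᵥ r = q ⬝ᵥ (yac - Iaq.mulVec yqc) := by
    have : r = Mac.mulVec (yac - Iaq.mulVec yqc) := by
      rw [mulVec_sub, hprimal, hr]
    rw [this, dotProduct_mulVec, ← mulVec_transpose, hsym.eq, hdual]
  rw [sub_dotProduct, h1, h2, sub_zero]
end
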